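/- Let H be the group presented by generators ξ₁, ξ₂, w, z with relations ξ₁³ = ξ₂³ = z³ = w² = 1, z central, ξ₂ξ₁ = z⁻¹ξ₁ξ₂, wξ₁w⁻¹ = ξ₁⁻¹, wξ₂w⁻¹ = ξ₂⁻¹. Then H has order 54. -/

import Mathlib

namespace Stmt5

/-- Free-group generators: `ξ₁, ξ₂, w, z`. -/
private def ξ₁ : FreeGroup (Fin 4) := FreeGroup.of 0
private def ξ₂ : FreeGroup (Fin 4) := FreeGroup.of 1
private def w : FreeGroup (Fin 4) := FreeGroup.of 2
private def z : FreeGroup (Fin 4) := FreeGroup.of 3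

/-- Relators: `ξ₁³ = ξ₂³ = z³ = w² = 1`, `z` central,
`ξ₂ξ₁ = z⁻¹ξ₁ξ₂`, `wξ₁w⁻¹ = ξ₁⁻¹`, `wξ₂w⁻¹ = ξ₂⁻¹`. -/
def rels : Set (FreeGroup (Fin 4)) :=
  {ξ₁ ^ 3, ξ₂ ^ 3, z ^ 3, w ^ 2,
   z * ξ₁ * z⁻¹ * ξ₁⁻¹, z * ξ₂ * z⁻¹ * ξ₂⁻¹, z * w * z⁻¹ * w⁻¹,
   ξ₂ * ξ₁ * (z⁻¹ * ξ₁ * ξ₂)⁻¹,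
   w * ξ₁ * w⁻¹ * ξ₁, w * ξ₂ * w⁻¹ * ξ₂}

/-! ### A concrete group of order 54 -/

def G : Type := ZMod 3 × ZMod 3 × ZMod 3 × ZMod 2
instance : DecidableEq G := inferInstanceAs (DecidableEq (ZMod 3 × ZMod 3 × ZMod 3 × ZMod 2))
instance : Fintype G := inferInstanceAs (Fintype (ZMod 3 × ZMod 3 × ZMod 3 × ZMod 2))
def ε : ZMod 2 → ZMod 3 := fun d => if d = 0 then 1 else -1
lemma ε_add : ∀ d d' : ZMod 2, ε (d + d') = ε d * ε d' := by decide
lemma ε_sq : ∀ d : ZMod 2, ε d * ε d = 1 := by decide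
def gmul (p q : G) : G :=
  (p.1 + ε p.2.2.2 * q.1, p.2.1 + ε p.2.2.2 * q.2.1,
   p.2.2.1 + q.2.2.1 + p.2.1 * (ε p.2.2.2 * q.1), p.2.2.2 + q.2.2.2)
instance : Mul G := ⟨gmul⟩
instance : One G := ⟨((0:ZMod 3),(0:ZMod 3),(0:ZMod 3),(0:ZMod 2))⟩
instance : Inv G := ⟨fun p => (-(ε p.2.2.2 * p.1), -(ε p.2.2.2 * p.2.1), p.2.1 * p.1 - p.2.2.1, p.2.2.2)⟩

set_option maxRecDepth 100000 in
set_option maxHeartbeats 1000000 in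
instance : Group G where
  mul_assoc := by
    rintro ⟨a,b,c,d⟩ ⟨a',b',c',d'⟩ ⟨a'',b'',c'',d''⟩
    show gmul (gmul _ _) _ = gmul _ (gmul _ _)
    unfold gmul
    simp only [ε_add]
    refine Prod.ext ?_ (Prod.ext ?_ (Prod.ext ?_ ?_)) <;> simp only
    · ring
    · ring
    · linear_combination (b' * (ε d' * a'')) * ε_sq d
    · ring
  one_mul := by decide
  mul_one := by decide
  inv_mul_cancel := by decide

def f : Fin 4 → G
  | 0 => (1, 0, 0, 0)
  | 1 => (0, 1, 0, 0)
  | 2 => (0, 0, 0, 1)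
  | 3 => (0, 0, -1, 0)

set_option maxRecDepth 100000 in
set_option maxHeartbeats 1000000 in
lemma hrels : ∀ r ∈ rels, FreeGroup.lift f r = 1 := by
  intro r hr
  simp only [rels, Set.mem_insert_iff, Set.mem_singleton_iff] at hr
  rcases hr with rfl|rfl|rfl|rfl|rfl|rfl|rfl|rfl|rfl|rfl <;>
    simp only [ξ₁, ξ₂, w, z, map_mul, map_pow, map_inv, FreeGroup.lift_apply_of] <;> decide

/-! ### The presented group and its relations -/

abbrev H := PresentedGroup rels
def X : H := PresentedGroup.of 0
def Y : H := PresentedGroup.of 1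
def W : H := PresentedGroup.of 2
def T : H := PresentedGroup.of 3

def φ : H →* G := PresentedGroup.toGroup hrels

lemma relH {r : FreeGroup (Fin 4)} (hr : r ∈ rels) : PresentedGroup.mk rels r = 1 :=
  (QuotientGroup.eq_one_iff _).mpr (Subgroup.subset_normalClosure hr)

lemma mkξ₁ : PresentedGroup.mk rels ξ₁ = X := rfl
lemma mkξ₂ : PresentedGroup.mk rels ξ₂ = Y := rfl
lemma mkw : PresentedGroup.mk rels w = W := rfl
lemma mkz : PresentedGroup.mk rels z = T := rfl

lemma hX3 : X ^ 3 = 1 := by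
  have h := relH (show ξ₁ ^ 3 ∈ rels by simp [rels]); rwa [map_pow] at h
lemma hY3 : Y ^ 3 = 1 := by
  have h := relH (show ξ₂ ^ 3 ∈ rels by simp [rels]); rwa [map_pow] at h
lemma hT3 : T ^ 3 = 1 := by
  have h := relH (show z ^ 3 ∈ rels by simp [rels]); rwa [map_pow] at h
lemma hW2 : W ^ 2 = 1 := by
  have h := relH (show w ^ 2 ∈ rels by simp [rels]); rwa [map_pow] at h
lemma cTX : Commute T X := by
  have h := relH (show z * ξ₁ * z⁻¹ * ξ₁⁻¹ ∈ rels by simp [rels])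
  simp only [map_mul, map_inv, mkξ₁, mkξ₂, mkw, mkz] at h
  exact mul_inv_eq_iff_eq_mul.mp (mul_inv_eq_one.mp h)
lemma cTY : Commute T Y := by
  have h := relH (show z * ξ₂ * z⁻¹ * ξ₂⁻¹ ∈ rels by simp [rels])
  simp only [map_mul, map_inv, mkξ₁, mkξ₂, mkw, mkz] at h
  exact mul_inv_eq_iff_eq_mul.mp (mul_inv_eq_one.mp h)
lemma cTW : Commute T W := by
  have h := relH (show z * w * z⁻¹ * w⁻¹ ∈ rels by simp [rels])
  simp only [map_mul, map_inv, mkξ₁, mkξ₂, mkw, mkz] at h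
  exact mul_inv_eq_iff_eq_mul.mp (mul_inv_eq_one.mp h)
lemma hYX : Y * X = T⁻¹ * X * Y := by
  have h := relH (show ξ₂ * ξ₁ * (z⁻¹ * ξ₁ * ξ₂)⁻¹ ∈ rels by simp [rels])
  simp only [map_mul, map_inv, mkξ₁, mkξ₂, mkw, mkz] at h
  exact mul_inv_eq_one.mp h
lemma hWX : W * X = X⁻¹ * W := by
  have h := relH (show w * ξ₁ * w⁻¹ * ξ₁ ∈ rels by simp [rels])
  simp only [map_mul, map_inv, mkξ₁, mkξ₂, mkw, mkz] at h
  have h2 : W * X * W⁻¹ = X⁻¹ := mul_eq_one_iff_eq_inv.mp h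
  calc W * X = (W * X * W⁻¹) * W := by group
    _ = X⁻¹ * W := by rw [h2]
lemma hWY : W * Y = Y⁻¹ * W := by
  have h := relH (show w * ξ₂ * w⁻¹ * ξ₂ ∈ rels by simp [rels])
  simp only [map_mul, map_inv, mkξ₁, mkξ₂, mkw, mkz] at h
  have h2 : W * Y * W⁻¹ = Y⁻¹ := mul_eq_one_iff_eq_inv.mp h
  calc W * Y = (W * Y * W⁻¹) * W := by group
    _ = Y⁻¹ * W := by rw [h2]

lemma Tinv : T⁻¹ = T ^ 2 := by
  apply inv_eq_of_mul_eq_one_right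
  have : T * T ^ 2 = T ^ 3 := by group
  rw [this, hT3]
lemma Xinv : X⁻¹ = X ^ 2 := by
  apply inv_eq_of_mul_eq_one_right
  have : X * X ^ 2 = X ^ 3 := by group
  rw [this, hX3]
lemma Yinv : Y⁻¹ = Y ^ 2 := by
  apply inv_eq_of_mul_eq_one_right
  have : Y * Y ^ 2 = Y ^ 3 := by group
  rw [this, hY3]

lemma Xpow_eq {m n : ℕ} (h : m % 3 = n % 3) : X ^ m = X ^ n := by
  rw [pow_eq_pow_mod m hX3, pow_eq_pow_mod n hX3, h]
lemma Ypow_eq {m n : ℕ} (h : m % 3 = n % 3) : Y ^ m = Y ^ n := by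
  rw [pow_eq_pow_mod m hY3, pow_eq_pow_mod n hY3, h]
lemma Tpow_eq {m n : ℕ} (h : m % 3 = n % 3) : T ^ m = T ^ n := by
  rw [pow_eq_pow_mod m hT3, pow_eq_pow_mod n hT3, h]
lemma Wpow_eq {m n : ℕ} (h : m % 2 = n % 2) : W ^ m = W ^ n := by
  rw [pow_eq_pow_mod m hW2, pow_eq_pow_mod n hW2, h]

lemma YXp : ∀ i : ℕ, Y * X ^ i = X ^ i * (T ^ (2 * i) * Y)
  | 0 => by simp
  | (i + 1) => by
    calc Y * X ^ (i + 1) = (Y * X ^ i) * X := by group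
      _ = (X ^ i * (T ^ (2 * i) * Y)) * X := by rw [YXp i]
      _ = X ^ i * (T ^ (2 * i) * (Y * X)) := by group
      _ = X ^ i * (T ^ (2 * i) * (T ^ 2 * X * Y)) := by rw [hYX, Tinv]
      _ = X ^ i * (T ^ (2 * i + 2) * X * Y) := by group
      _ = X ^ i * (X * T ^ (2 * i + 2) * Y) := by rw [(cTX.pow_left (2 * i + 2)).eq]
      _ = X ^ (i + 1) * (T ^ (2 * (i + 1)) * Y) := by
          have : 2 * i + 2 = 2 * (i + 1) := by ring
          rw [this]; group

lemma WXp : ∀ i : ℕ, W * X ^ i = X ^ (2 * i) * W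
  | 0 => by simp
  | (i + 1) => by
    calc W * X ^ (i + 1) = (W * X ^ i) * X := by group
      _ = X ^ (2 * i) * (W * X) := by rw [WXp i]; group
      _ = X ^ (2 * i) * (X ^ 2 * W) := by rw [hWX, Xinv]
      _ = X ^ (2 * (i + 1)) * W := by
          have : 2 * (i + 1) = 2 * i + 2 := by ring
          rw [this]; group

lemma WYp : ∀ i : ℕ, W * Y ^ i = Y ^ (2 * i) * W
  | 0 => by simp
  | (i + 1) => by
    calc W * Y ^ (i + 1) = (W * Y ^ i) * Y := by group
      _ = Y ^ (2 * i) * (W * Y) := by rw [WYp i]; group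
      _ = Y ^ (2 * i) * (Y ^ 2 * W) := by rw [hWY, Yinv]
      _ = Y ^ (2 * (i + 1)) * W := by
          have : 2 * (i + 1) = 2 * i + 2 := by ring
          rw [this]; group

/-! ### Normal form -/

def nf (p : G) : H :=
  X ^ p.1.val * (Y ^ p.2.1.val * (T ^ (-p.2.2.1).val * W ^ p.2.2.2.val))

lemma f0mul : ∀ p : G, f 0 * p = ((p.1 + 1, p.2.1, p.2.2.1, p.2.2.2) : G) := by
  unfold G at *; decide
lemma f1mul : ∀ p : G, f 1 * p = ((p.1, p.2.1 + 1, p.2.2.1 + p.1, p.2.2.2) : G) := by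
  unfold G at *; decide
lemma f2mul : ∀ p : G, f 2 * p = ((-p.1, -p.2.1, p.2.2.1, p.2.2.2 + 1) : G) := by
  unfold G at *; decide
lemma f3mul : ∀ p : G, f 3 * p = ((p.1, p.2.1, p.2.2.1 - 1, p.2.2.2) : G) := by
  unfold G at *; decide

lemma L0 (p : G) : X * nf p = nf (f 0 * p) := by
  obtain ⟨a, b, c, d⟩ := p
  erw [f0mul]
  show X * (X ^ a.val * (Y ^ b.val * (T ^ (-c).val * W ^ d.val)))
      = X ^ (a + 1).val * (Y ^ b.val * (T ^ (-c).val * W ^ d.val))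
  have h : X ^ (a.val + 1) = X ^ (a + 1).val :=
    Xpow_eq ((show ∀ a : ZMod 3, (a.val + 1) % 3 = (a + 1).val % 3 by decide) a)
  rw [← h]; group

lemma L3 (p : G) : T * nf p = nf (f 3 * p) := by
  obtain ⟨a, b, c, d⟩ := p
  erw [f3mul]
  show T * (X ^ a.val * (Y ^ b.val * (T ^ (-c).val * W ^ d.val)))
      = X ^ a.val * (Y ^ b.val * (T ^ (-(c - 1)).val * W ^ d.val))
  have h : T ^ ((-c).val + 1) = T ^ (-(c - 1)).val :=
    Tpow_eq ((show ∀ c : ZMod 3, ((-c).val + 1) % 3 = (-(c - 1)).val % 3 by decide) c)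
  calc T * (X ^ a.val * (Y ^ b.val * (T ^ (-c).val * W ^ d.val)))
      = (T * X ^ a.val) * (Y ^ b.val * (T ^ (-c).val * W ^ d.val)) := by group
    _ = (X ^ a.val * T) * (Y ^ b.val * (T ^ (-c).val * W ^ d.val)) := by
        rw [(cTX.pow_right a.val).eq]
    _ = X ^ a.val * ((T * Y ^ b.val) * (T ^ (-c).val * W ^ d.val)) := by group
    _ = X ^ a.val * ((Y ^ b.val * T) * (T ^ (-c).val * W ^ d.val)) := by
        rw [(cTY.pow_right b.val).eq]
    _ = X ^ a.val * (Y ^ b.val * (T ^ ((-c).val + 1) * W ^ d.val)) := by group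
    _ = X ^ a.val * (Y ^ b.val * (T ^ (-(c - 1)).val * W ^ d.val)) := by rw [h]

lemma L1 (p : G) : Y * nf p = nf (f 1 * p) := by
  obtain ⟨a, b, c, d⟩ := p
  erw [f1mul]
  show Y * (X ^ a.val * (Y ^ b.val * (T ^ (-c).val * W ^ d.val)))
      = X ^ a.val * (Y ^ (b + 1).val * (T ^ (-(c + a)).val * W ^ d.val))
  have hy : Y ^ (b.val + 1) = Y ^ (b + 1).val :=
    Ypow_eq ((show ∀ b : ZMod 3, (b.val + 1) % 3 = (b + 1).val % 3 by decide) b)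
  have ht : T ^ (2 * a.val + (-c).val) = T ^ (-(c + a)).val :=
    Tpow_eq ((show ∀ a c : ZMod 3, (2 * a.val + (-c).val) % 3 = (-(c + a)).val % 3 by decide) a c)
  calc Y * (X ^ a.val * (Y ^ b.val * (T ^ (-c).val * W ^ d.val)))
      = (Y * X ^ a.val) * (Y ^ b.val * (T ^ (-c).val * W ^ d.val)) := by group
    _ = (X ^ a.val * (T ^ (2 * a.val) * Y)) * (Y ^ b.val * (T ^ (-c).val * W ^ d.val)) := by
        rw [YXp]
    _ = X ^ a.val * ((T ^ (2 * a.val) * Y ^ (b.val + 1)) * (T ^ (-c).val * W ^ d.val)) := by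
        group
    _ = X ^ a.val * ((Y ^ (b.val + 1) * T ^ (2 * a.val)) * (T ^ (-c).val * W ^ d.val)) := by
        rw [(cTY.pow_pow (2 * a.val) (b.val + 1)).eq]
    _ = X ^ a.val * (Y ^ (b.val + 1) * (T ^ (2 * a.val + (-c).val) * W ^ d.val)) := by group
    _ = X ^ a.val * (Y ^ (b + 1).val * (T ^ (-(c + a)).val * W ^ d.val)) := by rw [hy, ht]

lemma L2 (p : G) : W * nf p = nf (f 2 * p) := by
  obtain ⟨a, b, c, d⟩ := p
  erw [f2mul]
  show W * (X ^ a.val * (Y ^ b.val * (T ^ (-c).val * W ^ d.val)))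
      = X ^ (-a).val * (Y ^ (-b).val * (T ^ (-c).val * W ^ (d + 1).val))
  have hx : X ^ (2 * a.val) = X ^ (-a).val :=
    Xpow_eq ((show ∀ a : ZMod 3, (2 * a.val) % 3 = (-a).val % 3 by decide) a)
  have hy : Y ^ (2 * b.val) = Y ^ (-b).val :=
    Ypow_eq ((show ∀ b : ZMod 3, (2 * b.val) % 3 = (-b).val % 3 by decide) b)
  have hw : W ^ (d.val + 1) = W ^ (d + 1).val :=
    Wpow_eq ((show ∀ d : ZMod 2, (d.val + 1) % 2 = (d + 1).val % 2 by decide) d)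
  calc W * (X ^ a.val * (Y ^ b.val * (T ^ (-c).val * W ^ d.val)))
      = (W * X ^ a.val) * (Y ^ b.val * (T ^ (-c).val * W ^ d.val)) := by group
    _ = (X ^ (2 * a.val) * W) * (Y ^ b.val * (T ^ (-c).val * W ^ d.val)) := by rw [WXp]
    _ = X ^ (2 * a.val) * ((W * Y ^ b.val) * (T ^ (-c).val * W ^ d.val)) := by group
    _ = X ^ (2 * a.val) * ((Y ^ (2 * b.val) * W) * (T ^ (-c).val * W ^ d.val)) := by rw [WYp]
    _ = X ^ (2 * a.val) * (Y ^ (2 * b.val) * ((W * T ^ (-c).val) * W ^ d.val)) := by group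
    _ = X ^ (2 * a.val) * (Y ^ (2 * b.val) * ((T ^ (-c).val * W) * W ^ d.val)) := by
        rw [((cTW.symm).pow_right (-c).val).eq]
    _ = X ^ (2 * a.val) * (Y ^ (2 * b.val) * (T ^ (-c).val * W ^ (d.val + 1))) := by group
    _ = X ^ (-a).val * (Y ^ (-b).val * (T ^ (-c).val * W ^ (d + 1).val)) := by
        rw [hx, hy, hw]

lemma Lgen : ∀ (i : Fin 4) (p : G), PresentedGroup.of (rels := rels) i * nf p = nf (f i * p) := by
  intro i
  fin_cases i
  exacts [L0, L1, L2, L3]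

lemma nf_surjective : Function.Surjective nf := by
  intro h
  have key : ∀ h : H, ∃ g : G, ∀ p : G, h * nf p = nf (g * p) := by
    intro h
    have hmem : h ∈ Subgroup.closure (Set.range (PresentedGroup.of : Fin 4 → H)) := by
      rw [PresentedGroup.closure_range_of]; trivial
    induction hmem using Subgroup.closure_induction with
    | mem x hx =>
        obtain ⟨i, rfl⟩ := hx
        exact ⟨f i, Lgen i⟩
    | one => exact ⟨1, fun p => by rw [one_mul, one_mul]⟩
    | mul x y _ _ hx hy =>
        obtain ⟨gx, hgx⟩ := hx
        obtain ⟨gy, hgy⟩ := hy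
        exact ⟨gx * gy, fun p => by rw [mul_assoc, hgy, hgx, mul_assoc]⟩
    | inv x _ hx =>
        obtain ⟨gx, hgx⟩ := hx
        refine ⟨gx⁻¹, fun p => ?_⟩
        have := hgx (gx⁻¹ * p)
        rw [mul_inv_cancel_left] at this
        rw [← this, inv_mul_cancel_left]
  obtain ⟨g, hg⟩ := key h
  refine ⟨g, ?_⟩
  have h1 : nf 1 = 1 := by
    show X ^ (0:ZMod 3).val * (Y ^ (0:ZMod 3).val * (T ^ (-(0:ZMod 3)).val * W ^ (0:ZMod 2).val)) = 1
    norm_num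
  have := hg 1
  rw [mul_one g, h1, mul_one] at this
  exact this.symm

instance : Finite H := Finite.of_surjective nf nf_surjective

lemma card_le : Nat.card H ≤ 54 := by
  have := Nat.card_le_card_of_surjective nf nf_surjective
  simpa [G] using this

set_option maxRecDepth 100000 in
set_option maxHeartbeats 1000000 in
lemma φ_surjective : Function.Surjective φ := by
  have hcomp : Function.Surjective (φ ∘ nf) := by
    have : ∀ p : G, (φ ∘ nf) p =
        f 0 ^ p.1.val * (f 1 ^ p.2.1.val * (f 3 ^ (-p.2.2.1).val * f 2 ^ p.2.2.2.val)) := by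
      intro p
      simp only [Function.comp_apply, nf, map_mul, map_pow]
      rw [show φ X = f 0 from PresentedGroup.toGroup.of hrels,
          show φ Y = f 1 from PresentedGroup.toGroup.of hrels,
          show φ T = f 3 from PresentedGroup.toGroup.of hrels,
          show φ W = f 2 from PresentedGroup.toGroup.of hrels]
    intro g
    have hp : f 0 ^ g.1.val * (f 1 ^ g.2.1.val * (f 3 ^ (-g.2.2.1).val * f 2 ^ g.2.2.2.val)) = g :=
      (show ∀ g : G,
        f 0 ^ g.1.val * (f 1 ^ g.2.1.val * (f 3 ^ (-g.2.2.1).val * f 2 ^ g.2.2.2.val)) = g by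
        decide) g
    exact ⟨g, by rw [this, hp]⟩
  exact hcomp.of_comp

lemma card_ge : 54 ≤ Nat.card H := by
  have hG : Nat.card G = 54 := by
    rw [Nat.card_eq_fintype_card]
    decide
  calc (54 : ℕ) = Nat.card G := hG.symm
    _ ≤ Nat.card H := Nat.card_le_card_of_surjective φ φ_surjective

theorem card_presented_eq_54 : Nat.card (PresentedGroup rels) = 54 :=
  le_antisymm card_le card_ge

end Stmt5
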